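/- arXiv:1502.07294 — 3 statements merged into one kernel-verified Lean document; each statement's English description precedes it below -/
import Mathlib

section
/- For each pair a, b of unit quaternions, the map f_{a,b} : 𝕆 → 𝕆, (x₁,x₂) ↦ (a x₁ a⁻¹, a x₂ b⁻¹) is an ℝ-algebra automorphism of the split Cayley algebra 𝕆. -/
open scoped Quaternion

/-- Multiplication of the split Cayley algebra `𝕆 = ℍ ⊕ ℍ`:
`(x₁,x₂)(y₁,y₂) = (x₁y₁ + y₂·conj(x₂), y₁x₂ + conj(x₁)·y₂)`. -/
noncomputable def octMul (x y : ℍ[ℝ] × ℍ[ℝ]) : ℍ[ℝ] × ℍ[ℝ] :=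
  (x.1 * y.1 + y.2 * star x.2, y.1 * x.2 + star x.1 * y.2)

/-- The map `f_{a,b} : 𝕆 → 𝕆, (x₁,x₂) ↦ (a x₁ a⁻¹, a x₂ b⁻¹)` for unit quaternions `a, b`. -/
noncomputable def fab (a b : ℍ[ℝ]) (p : ℍ[ℝ] × ℍ[ℝ]) : ℍ[ℝ] × ℍ[ℝ] :=
  (a * p.1 * a⁻¹, a * p.2 * b⁻¹)

/-- For unit quaternions `a, b`, the map `f_{a,b}` is an ℝ-algebra automorphism of the split
Cayley algebra `𝕆`: it is an ℝ-linear bijection and multiplicative. -/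
theorem stmt6 (a b : ℍ[ℝ]) (ha : a * star a = 1) (hb : b * star b = 1) :
    Function.Bijective (fab a b) ∧
    (∀ p q : ℍ[ℝ] × ℍ[ℝ], fab a b (octMul p q) = octMul (fab a b p) (fab a b q)) ∧
    (∀ (c : ℝ) (p : ℍ[ℝ] × ℍ[ℝ]), fab a b (c • p) = c • fab a b p) ∧
    (∀ p q : ℍ[ℝ] × ℍ[ℝ], fab a b (p + q) = fab a b p + fab a b q) := by
  have ha0 : a ≠ 0 := by rintro rfl; simp at ha
  have hb0 : b ≠ 0 := by rintro rfl; simp at hb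
  have hai : a⁻¹ = star a := inv_eq_of_mul_eq_one_right ha
  have hbi : b⁻¹ = star b := inv_eq_of_mul_eq_one_right hb
  have ha2 : star a * a = 1 := by rw [← hai]; exact inv_mul_cancel₀ ha0
  have hb2 : star b * b = 1 := by rw [← hbi]; exact inv_mul_cancel₀ hb0
  have hais : (star a)⁻¹ = a := by rw [← hai, inv_inv]
  have hbis : (star b)⁻¹ = b := by rw [← hbi, inv_inv]
  have haL : ∀ x : ℍ[ℝ], a * (star a * x) = x := by
    intro x; rw [← mul_assoc, ha, one_mul]
  have haR : ∀ x : ℍ[ℝ], star a * (a * x) = x := by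
    intro x; rw [← mul_assoc, ha2, one_mul]
  have hbL : ∀ x : ℍ[ℝ], b * (star b * x) = x := by
    intro x; rw [← mul_assoc, hb, one_mul]
  have hbR : ∀ x : ℍ[ℝ], star b * (b * x) = x := by
    intro x; rw [← mul_assoc, hb2, one_mul]
  refine ⟨?_, ?_, ?_, ?_⟩
  · have : Function.LeftInverse (fab (star a) (star b)) (fab a b) ∧
        Function.RightInverse (fab (star a) (star b)) (fab a b) := by
      constructor <;> intro p <;>
        simp [fab, hai, hbi, hais, hbis, mul_assoc, haL, haR, hbL, hbR, ha, hb, ha2, hb2]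
    exact ⟨this.1.injective, this.2.surjective⟩
  · intro p q
    simp only [fab, octMul, Prod.mk.injEq, hai, hbi, star_mul, star_star, mul_add, add_mul,
      mul_assoc, haL, haR, hbL, hbR]
  · intro c p
    simp [fab, Prod.smul_mk, smul_mul_assoc, mul_smul_comm, Prod.smul_fst, Prod.smul_snd]
  · intro p q
    simp [fab, mul_add, add_mul, Prod.fst_add, Prod.snd_add, Prod.mk_add_mk]
end

section
/- For an element x = u + 𝕀v of Spin(4) (with u, v quaternions and 𝕀 = e₁e₂e₃e₄), the spinor norm satisfies N(u + 𝕀v) = u·conj(u) + v·conj(v) + 𝕀(u·conj(v) + v·conj(u)); hence N(x) = 1 if and only if u·conj(u) + v·conj(v) = 1 and u·conj(v) + v·conj(u) = 0, and in that case both u+v and u−v are unit quaternions. -/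
open scoped Quaternion

/-- The negative definite standard quadratic form `-q₄` on `ℝ⁴`. -/
noncomputable def Qneg4 : QuadraticForm ℝ (Fin 4 → ℝ) :=
  QuadraticMap.weightedSumSquares ℝ (fun _ : Fin 4 => (-1 : ℝ))

/-- The image of the `i`-th standard basis vector of `ℝ⁴` in `Cl(4)`. -/
noncomputable def e (i : Fin 4) : CliffordAlgebra Qneg4 :=
  CliffordAlgebra.ι Qneg4 (Pi.single i 1)

/-- The embedding of the quaternions into `Cl(4)⁰`, sending `1, i, j, k` to
`1, e₁e₂, e₂e₃, e₃e₁`. -/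
noncomputable def qmap (x : ℍ[ℝ]) : CliffordAlgebra Qneg4 :=
  algebraMap ℝ _ x.re + x.imI • (e 0 * e 1) + x.imJ • (e 1 * e 2) + x.imK • (e 2 * e 0)

/-- `𝕀 = e₁e₂e₃e₄ ∈ Cl(4)⁰`. -/
noncomputable def I4 : CliffordAlgebra Qneg4 := e 0 * e 1 * e 2 * e 3

/-- The spinor norm `N(x) = x · conj(x)` where `conj` is the Clifford conjugation
`τ ∘ Π = reverse ∘ involute`. -/
noncomputable def spinorNorm (x : CliffordAlgebra Qneg4) : CliffordAlgebra Qneg4 :=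
  x * CliffordAlgebra.reverse (CliffordAlgebra.involute x)

/-! ### Basic relations among the generators -/

lemma Qval (i : Fin 4) : Qneg4 (Pi.single i 1) = -1 := by
  simp [Qneg4, QuadraticMap.weightedSumSquares_apply, Pi.single_apply]

lemma esq (i : Fin 4) : e i * e i = -1 := by
  rw [e, CliffordAlgebra.ι_sq_scalar, Qval, map_neg, map_one]

lemma eanti {i j : Fin 4} (h : i ≠ j) : e i * e j = -(e j * e i) := by
  have h2 := CliffordAlgebra.ι_mul_ι_add_swap (Q := Qneg4) (Pi.single i 1) (Pi.single j 1)
  have hp : QuadraticMap.polar Qneg4 (Pi.single i 1) (Pi.single j 1) = 0 := by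
    fin_cases i <;> fin_cases j <;>
      simp_all [QuadraticMap.polar, Qneg4, QuadraticMap.weightedSumSquares_apply,
        Fin.sum_univ_four, Pi.single_apply]
  rw [hp, map_zero] at h2
  rw [e, e]; exact eq_neg_of_add_eq_zero_left h2

lemma esqn (i : Fin 4) (x : CliffordAlgebra Qneg4) : e i * (e i * x) = -x := by
  rw [← mul_assoc, esq, neg_one_mul]

lemma eantin {i j : Fin 4} (h : i ≠ j) (x : CliffordAlgebra Qneg4) :
    e i * (e j * x) = -(e j * (e i * x)) := by
  rw [← mul_assoc, eanti h, neg_mul, mul_assoc]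

lemma b10 : e 1 * e 0 = -(e 0 * e 1) := eanti (by decide)
lemma b20 : e 2 * e 0 = -(e 0 * e 2) := eanti (by decide)
lemma b21 : e 2 * e 1 = -(e 1 * e 2) := eanti (by decide)
lemma b30 : e 3 * e 0 = -(e 0 * e 3) := eanti (by decide)
lemma b31 : e 3 * e 1 = -(e 1 * e 3) := eanti (by decide)
lemma b32 : e 3 * e 2 = -(e 2 * e 3) := eanti (by decide)
lemma n10 (x) : e 1 * (e 0 * x) = -(e 0 * (e 1 * x)) := eantin (by decide) x
lemma n20 (x) : e 2 * (e 0 * x) = -(e 0 * (e 2 * x)) := eantin (by decide) x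
lemma n21 (x) : e 2 * (e 1 * x) = -(e 1 * (e 2 * x)) := eantin (by decide) x
lemma n30 (x) : e 3 * (e 0 * x) = -(e 0 * (e 3 * x)) := eantin (by decide) x
lemma n31 (x) : e 3 * (e 1 * x) = -(e 1 * (e 3 * x)) := eantin (by decide) x
lemma n32 (x) : e 3 * (e 2 * x) = -(e 2 * (e 3 * x)) := eantin (by decide) x

/-! ### Structural lemmas -/

open CliffordAlgebra in
lemma involute_e (i : Fin 4) : involute (e i) = -(e i) := involute_ι _
open CliffordAlgebra in
lemma reverse_e (i : Fin 4) : reverse (e i) = e i := reverse_ι _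

open CliffordAlgebra in
lemma conj_e_mul_e (i j : Fin 4) : reverse (involute (e i * e j)) = e j * e i := by
  simp [e]

open CliffordAlgebra in
lemma conj_qmap (x : ℍ[ℝ]) : reverse (involute (qmap x)) = qmap (star x) := by
  simp only [qmap, map_add, map_smul, AlgHom.commutes, reverse.commutes,
    Quaternion.re_star, Quaternion.imI_star, Quaternion.imJ_star, Quaternion.imK_star,
    conj_e_mul_e]
  simp only [b10, b21, eanti (show (0:Fin 4) ≠ 2 by decide)]
  module

open CliffordAlgebra in
lemma conj_I4 : reverse (involute I4) = I4 := by
  simp only [I4, map_mul, reverse.map_mul, involute_e, map_neg, reverse_e,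
    mul_neg, neg_mul, neg_neg]
  simp only [mul_assoc, esq, esqn, b10,b20,b21,b30,b31,b32, n10,n20,n21,n30,n31,n32,
    mul_neg, neg_mul, neg_neg, mul_one, one_mul]

lemma I4_sq : I4 * I4 = 1 := by
  simp only [I4, mul_assoc, esq, esqn, b10,b20,b21,b30,b31,b32, n10,n20,n21,n30,n31,n32,
    mul_neg, neg_mul, neg_neg, mul_one, one_mul]

lemma I4_comm (x : ℍ[ℝ]) : I4 * qmap x = qmap x * I4 := by
  simp only [qmap, I4, mul_add, add_mul, Algebra.algebraMap_eq_smul_one, smul_mul_assoc,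
    mul_smul_comm, mul_one, one_mul]
  simp only [mul_assoc, esq, esqn, b10,b20,b21,b30,b31,b32, n10,n20,n21,n30,n31,n32,
    mul_neg, neg_mul, neg_neg, mul_one, one_mul, smul_neg]

lemma qmap_mul (x y : ℍ[ℝ]) : qmap (x * y) = qmap x * qmap y := by
  simp only [qmap, Quaternion.re_mul, Quaternion.imI_mul, Quaternion.imJ_mul,
    Quaternion.imK_mul, Algebra.algebraMap_eq_smul_one, mul_add, add_mul,
    smul_mul_assoc, mul_smul_comm, smul_smul, mul_one, one_mul]
  simp only [mul_assoc, esq, esqn, b10,b20,b21,b30,b31,b32, n10,n20,n21,n30,n31,n32,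
    mul_neg, neg_mul, neg_neg, mul_one, one_mul, smul_neg]
  module

lemma qmap_one : qmap 1 = 1 := by simp [qmap]

lemma qmap_zero : qmap 0 = 0 := by simp [qmap]

lemma qmap_add (x y : ℍ[ℝ]) : qmap (x + y) = qmap x + qmap y := by
  simp only [qmap, Quaternion.re_add, Quaternion.imI_add, Quaternion.imJ_add,
    Quaternion.imK_add, map_add, add_smul]
  abel

open CliffordAlgebra in
lemma part1 (u v : ℍ[ℝ]) :
    spinorNorm (qmap u + I4 * qmap v) =
      qmap (u * star u + v * star v) + I4 * qmap (u * star v + v * star u) := by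
  have hconj : reverse (involute (qmap u + I4 * qmap v)) =
      qmap (star u) + I4 * qmap (star v) := by
    simp only [map_add, map_mul, reverse.map_mul, conj_qmap, conj_I4, ← I4_comm]
  rw [spinorNorm, hconj, qmap_add, qmap_add, qmap_mul, qmap_mul, qmap_mul, qmap_mul]
  rw [add_mul, mul_add, mul_add]
  rw [show I4 * qmap v * (qmap (star u)) = I4 * (qmap v * qmap (star u)) by rw [mul_assoc]]
  rw [show I4 * qmap v * (I4 * qmap (star v)) = qmap v * qmap (star v) by
    rw [mul_assoc, ← mul_assoc (qmap v), ← I4_comm, mul_assoc, ← mul_assoc, I4_sq, one_mul]]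
  rw [show qmap u * (I4 * qmap (star v)) = I4 * (qmap u * qmap (star v)) by
    rw [← mul_assoc, ← I4_comm, mul_assoc]]
  rw [mul_add]
  abel

/-! ### A matrix representation of `Cl(0,4)`, used for injectivity -/

noncomputable def Lq : (Fin 4 → ℝ) →ₗ[ℝ] ℍ[ℝ] where
  toFun m := ⟨m 0, m 1, m 2, m 3⟩
  map_add' m n := by ext <;> simp <;> rfl
  map_smul' r m := by ext <;> simp <;> rfl

lemma Lq_re (m) : (Lq m).re = m 0 := rfl
lemma Lq_imI (m) : (Lq m).imI = m 1 := rfl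
lemma Lq_imJ (m) : (Lq m).imJ = m 2 := rfl
lemma Lq_imK (m) : (Lq m).imK = m 3 := rfl

noncomputable def Lm : (Fin 4 → ℝ) →ₗ[ℝ] Matrix (Fin 2) (Fin 2) ℍ[ℝ] where
  toFun m := !![0, Lq m; -star (Lq m), 0]
  map_add' m n := by
    refine Matrix.ext fun i j => ?_
    fin_cases i <;> fin_cases j <;>
      simp [Quaternion.ext_iff, Lq_re, Lq_imI, Lq_imJ, Lq_imK, add_comm]
  map_smul' r m := by
    refine Matrix.ext fun i j => ?_
    fin_cases i <;> fin_cases j <;>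
      simp [Quaternion.ext_iff, Lq_re, Lq_imI, Lq_imJ, Lq_imK]

lemma hLm (m : Fin 4 → ℝ) :
    Lm m * Lm m = algebraMap ℝ (Matrix (Fin 2) (Fin 2) ℍ[ℝ]) (Qneg4 m) := by
  have hq : Lq m * star (Lq m) = algebraMap ℝ ℍ[ℝ] (m 0^2 + m 1^2 + m 2^2 + m 3^2) := by
    ext <;>
      simp [Quaternion.algebraMap_def, ← Quaternion.coe_pow, Quaternion.re_mul,
        Quaternion.imI_mul, Quaternion.imJ_mul, Quaternion.imK_mul,
        Lq_re, Lq_imI, Lq_imJ, Lq_imK] <;> ring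
  have hq' : star (Lq m) * Lq m = algebraMap ℝ ℍ[ℝ] (m 0^2 + m 1^2 + m 2^2 + m 3^2) := by
    ext <;>
      simp [Quaternion.algebraMap_def, ← Quaternion.coe_pow, Quaternion.re_mul,
        Quaternion.imI_mul, Quaternion.imJ_mul, Quaternion.imK_mul,
        Lq_re, Lq_imI, Lq_imJ, Lq_imK] <;> ring
  have hQ : Qneg4 m = -(m 0^2 + m 1^2 + m 2^2 + m 3^2) := by
    simp [Qneg4, QuadraticMap.weightedSumSquares_apply, Fin.sum_univ_four]; ring
  rw [hQ]
  have hd : Lm m = !![0, Lq m; -star (Lq m), 0] := rfl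
  rw [hd]
  refine Matrix.ext fun i j => ?_
  fin_cases i <;> fin_cases j <;>
    simp [Matrix.mul_apply, Fin.sum_univ_two, Matrix.algebraMap_matrix_apply, hq, hq',
      map_neg, mul_neg, neg_mul]

noncomputable def F : CliffordAlgebra Qneg4 →ₐ[ℝ] Matrix (Fin 2) (Fin 2) ℍ[ℝ] :=
  CliffordAlgebra.lift Qneg4 ⟨Lm, hLm⟩

lemma Fe (i : Fin 4) :
    F (e i) = !![0, Lq (Pi.single i 1); -star (Lq (Pi.single i 1)), 0] := by
  rw [e, F, CliffordAlgebra.lift_ι_apply]; rfl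

lemma star_Lq (m) : star (Lq m) = ⟨m 0, -(m 1), -(m 2), -(m 3)⟩ := by
  ext <;> simp [Lq_re, Lq_imI, Lq_imJ, Lq_imK]

lemma FE1 : F (e 0 * e 1) = (!![(⟨0,1,0,0⟩ : ℍ[ℝ]), 0; 0, ⟨0,-1,0,0⟩] : Matrix (Fin 2) (Fin 2) ℍ[ℝ]) := by
  rw [map_mul, Fe, Fe]
  refine Matrix.ext fun i j => ?_
  fin_cases i <;> fin_cases j <;> ext <;>
    simp [Matrix.mul_apply, Fin.sum_univ_two, Lq_re, Lq_imI, Lq_imJ, Lq_imK, Pi.single_apply,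
      Quaternion.ext_iff, Quaternion.re_mul, Quaternion.imI_mul, Quaternion.imJ_mul,
      Quaternion.imK_mul]

lemma FE2 : F (e 1 * e 2) = (!![(⟨0,0,0,1⟩ : ℍ[ℝ]), 0; 0, ⟨0,0,0,1⟩] : Matrix (Fin 2) (Fin 2) ℍ[ℝ]) := by
  rw [map_mul, Fe, Fe]
  refine Matrix.ext fun i j => ?_
  fin_cases i <;> fin_cases j <;> ext <;>
    simp [Matrix.mul_apply, Fin.sum_univ_two, Lq_re, Lq_imI, Lq_imJ, Lq_imK, Pi.single_apply,
      Quaternion.ext_iff, Quaternion.re_mul, Quaternion.imI_mul, Quaternion.imJ_mul,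
      Quaternion.imK_mul]

lemma FE3 : F (e 2 * e 0) = (!![(⟨0,0,-1,0⟩ : ℍ[ℝ]), 0; 0, ⟨0,0,1,0⟩] : Matrix (Fin 2) (Fin 2) ℍ[ℝ]) := by
  rw [map_mul, Fe, Fe]
  refine Matrix.ext fun i j => ?_
  fin_cases i <;> fin_cases j <;> ext <;>
    simp [Matrix.mul_apply, Fin.sum_univ_two, Lq_re, Lq_imI, Lq_imJ, Lq_imK, Pi.single_apply,
      Quaternion.ext_iff, Quaternion.re_mul, Quaternion.imI_mul, Quaternion.imJ_mul,
      Quaternion.imK_mul]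

lemma FI4 : F I4 = (!![(⟨-1,0,0,0⟩ : ℍ[ℝ]), 0; 0, ⟨1,0,0,0⟩] : Matrix (Fin 2) (Fin 2) ℍ[ℝ]) := by
  rw [I4, map_mul, map_mul, map_mul, Fe, Fe, Fe, Fe]
  refine Matrix.ext fun i j => ?_
  fin_cases i <;> fin_cases j <;> ext <;>
    simp [Matrix.mul_apply, Fin.sum_univ_two, Lq_re, Lq_imI, Lq_imJ, Lq_imK, Pi.single_apply,
      Quaternion.ext_iff, Quaternion.re_mul, Quaternion.imI_mul, Quaternion.imJ_mul,
      Quaternion.imK_mul]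

lemma FQ00 (a b c d : ℝ) :
    (⟨a,0,0,0⟩ : ℍ[ℝ]) + b • (⟨0,1,0,0⟩ : ℍ[ℝ]) + c • (⟨0,0,0,1⟩ : ℍ[ℝ]) + d • (⟨0,0,-1,0⟩ : ℍ[ℝ]) =
      (⟨a, b, -d, c⟩ : ℍ[ℝ]) := by
  ext <;> simp [Quaternion.re_smul, Quaternion.imI_smul, Quaternion.imJ_smul, Quaternion.imK_smul]

lemma FQ11 (a b c d : ℝ) :
    (⟨a,0,0,0⟩ : ℍ[ℝ]) + b • (⟨0,-1,0,0⟩ : ℍ[ℝ]) + c • (⟨0,0,0,1⟩ : ℍ[ℝ]) + d • (⟨0,0,1,0⟩ : ℍ[ℝ]) =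
      (⟨a, -b, d, c⟩ : ℍ[ℝ]) := by
  ext <;> simp [Quaternion.re_smul, Quaternion.imI_smul, Quaternion.imJ_smul, Quaternion.imK_smul]

lemma L00 (a1 a2 a3 a4 b1 b2 b3 b4 : ℝ)
    (h : (⟨a1, a2, -a4, a3⟩ : ℍ[ℝ]) + ((⟨-1,0,0,0⟩ : ℍ[ℝ]) * (⟨b1, b2, -b4, b3⟩ : ℍ[ℝ]) + 0 * 0) = 0) :
    a1 - b1 = 0 ∧ a2 - b2 = 0 ∧ -a4 + b4 = 0 ∧ a3 - b3 = 0 := by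
  have h1 := congrArg QuaternionAlgebra.re h
  have h2 := congrArg QuaternionAlgebra.imI h
  have h3 := congrArg QuaternionAlgebra.imJ h
  have h4 := congrArg QuaternionAlgebra.imK h
  simp [Quaternion.re_mul, Quaternion.imI_mul, Quaternion.imJ_mul, Quaternion.imK_mul] at h1 h2 h3 h4
  refine ⟨?_, ?_, ?_, ?_⟩ <;> linarith

lemma L11 (a1 a2 a3 a4 b1 b2 b3 b4 : ℝ)
    (h : (⟨a1, -a2, a4, a3⟩ : ℍ[ℝ]) + (0 * 0 + (⟨1,0,0,0⟩ : ℍ[ℝ]) * (⟨b1, -b2, b4, b3⟩ : ℍ[ℝ])) = 0) :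
    a1 + b1 = 0 ∧ -a2 - b2 = 0 ∧ a4 + b4 = 0 ∧ a3 + b3 = 0 := by
  have h1 := congrArg QuaternionAlgebra.re h
  have h2 := congrArg QuaternionAlgebra.imI h
  have h3 := congrArg QuaternionAlgebra.imJ h
  have h4 := congrArg QuaternionAlgebra.imK h
  simp [Quaternion.re_mul, Quaternion.imI_mul, Quaternion.imJ_mul, Quaternion.imK_mul] at h1 h2 h3 h4
  refine ⟨?_, ?_, ?_, ?_⟩ <;> linarith

lemma FQ (x : ℍ[ℝ]) :
    F (qmap x) = (!![(⟨x.re, x.imI, -x.imK, x.imJ⟩ : ℍ[ℝ]), 0; 0, ⟨x.re, -x.imI, x.imK, x.imJ⟩] : Matrix (Fin 2) (Fin 2) ℍ[ℝ]) := by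
  rw [qmap, map_add, map_add, map_add, map_smul, map_smul, map_smul, AlgHom.commutes,
    FE1, FE2, FE3]
  refine Matrix.ext fun i j => ?_
  fin_cases i <;> fin_cases j <;>
    simp [Matrix.algebraMap_matrix_apply, Quaternion.algebraMap_def, Quaternion.ext_iff,
      Quaternion.re_coe, Quaternion.imI_coe, Quaternion.imJ_coe, Quaternion.imK_coe]
  · exact FQ00 x.re x.imI x.imJ x.imK
  · exact FQ11 x.re x.imI x.imJ x.imK

lemma qmap_inj (A B : ℍ[ℝ]) (h : qmap A + I4 * qmap B = 0) : A = 0 ∧ B = 0 := by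
  have hF := congrArg F h
  rw [map_add, map_mul, map_zero, FQ, FQ, FI4] at hF
  have h00 := congrArg (fun M => M 0 0) hF
  have h11 := congrArg (fun M => M 1 1) hF
  simp only [Matrix.add_apply, Matrix.mul_apply, Fin.sum_univ_two, Matrix.zero_apply] at h00 h11
  obtain ⟨p1, p2, p3, p4⟩ := L00 A.re A.imI A.imJ A.imK B.re B.imI B.imJ B.imK h00
  obtain ⟨q1, q2, q3, q4⟩ := L11 A.re A.imI A.imJ A.imK B.re B.imI B.imJ B.imK h11
  constructor <;> ext <;>
    simp only [Quaternion.re_zero, Quaternion.imI_zero, Quaternion.imJ_zero,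
      Quaternion.imK_zero] <;> linarith

lemma qmap_sub (x y : ℍ[ℝ]) : qmap (x - y) = qmap x - qmap y := by
  simp only [qmap, Quaternion.re_sub, Quaternion.imI_sub, Quaternion.imJ_sub,
    Quaternion.imK_sub, map_sub, sub_smul]
  abel

/-- `N(u + 𝕀v) = u·conj(u) + v·conj(v) + 𝕀(u·conj(v) + v·conj(u))`; hence `N(x) = 1` iff
`u·conj(u) + v·conj(v) = 1` and `u·conj(v) + v·conj(u) = 0`, and in that case both `u+v`
and `u−v` are unit quaternions. -/
theorem stmt8 (u v : ℍ[ℝ]) :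
    spinorNorm (qmap u + I4 * qmap v) =
      qmap (u * star u + v * star v) + I4 * qmap (u * star v + v * star u) ∧
    (spinorNorm (qmap u + I4 * qmap v) = 1 ↔
      (u * star u + v * star v = 1 ∧ u * star v + v * star u = 0)) ∧
    (spinorNorm (qmap u + I4 * qmap v) = 1 →
      (u + v) * star (u + v) = 1 ∧ (u - v) * star (u - v) = 1) := by
  have hiff : spinorNorm (qmap u + I4 * qmap v) = 1 ↔
      (u * star u + v * star v = 1 ∧ u * star v + v * star u = 0) := by
    constructor
    · intro h
      rw [part1] at h
      have h0 : qmap ((u * star u + v * star v) - 1) + I4 * qmap (u * star v + v * star u)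
          = 0 := by
        rw [qmap_sub, qmap_one, sub_add_eq_add_sub, h, sub_self]
      obtain ⟨hA, hB⟩ := qmap_inj _ _ h0
      exact ⟨sub_eq_zero.mp hA, hB⟩
    · rintro ⟨h1, h2⟩
      rw [part1, h1, h2, qmap_one, qmap_zero, mul_zero, add_zero]
  refine ⟨part1 u v, hiff, ?_⟩
  intro h
  obtain ⟨h1, h2⟩ := hiff.mp h
  constructor
  · have : (u + v) * star (u + v) = (u * star u + v * star v) + (u * star v + v * star u) := by
      rw [star_add]; noncomm_ring
    rw [this, h1, h2, add_zero]
  · have : (u - v) * star (u - v) = (u * star u + v * star v) - (u * star v + v * star u) := by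
      rw [star_sub]; noncomm_ring
    rw [this, h1, h2, sub_zero]
end

section
/- In the spin-extended Weyl group W^spin(Π) defined by generators r₁,…,r_n and relations (R1) r_i⁸ = 1, (R2) r_j⁻¹ r_i² r_j = r_i² r_j^{2n(i,j)}, (R3) braid relations of length m_{ij}, the following hold for all i ≠ j: (a) [r_i², r_j²] = r_j^{4n(i,j)} and r_i^{4n(j,i)} = r_j^{4n(i,j)}; (b) if n(i,j) = n(j,i) = 1 then r_i⁴ = r_j⁴, otherwise r_i² and r_j² commute; (c) if n(i,j) = 0 and n(j,i) = 1 then r_i⁴ = 1; (d) r_j commutes with r_i⁴. Consequently the subgroup generated by {r_i⁴ : i ∈ I} is central in W^spin(Π). -/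
/-- `n(i,j)`: `0` if `a(i,j)` is even, `1` if `a(i,j)` is odd. -/
def nPar (a : ℤ) : ℕ := if Even a then 0 else 1

/-- `m_{ij}`: `2, 3, 4, 6` according as `a(i,j)a(j,i) = 0, 1, 2, 3`, and `0` (no braid
relation) if `a(i,j)a(j,i) ≥ 4`. -/
def mOf (c : ℤ) : ℕ :=
  if c = 0 then 2 else if c = 1 then 3 else if c = 2 then 4 else if c = 3 then 6 else 0

/-- The alternating word `r_i r_j r_i ⋯` of length `m` in the free group. -/
def braidWord {I : Type*} : ℕ → I → I → FreeGroup I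
  | 0, _, _ => 1
  | (m + 1), i, j => FreeGroup.of i * braidWord m j i

/-- The relators (R1), (R2), (R3) of the spin-extended Weyl group. -/
def spinRels {I : Type*} (A : I → I → ℤ) : Set (FreeGroup I) :=
  {x | ∃ i : I, x = FreeGroup.of i ^ 8} ∪
  {x | ∃ i j : I, i ≠ j ∧
    x = ((FreeGroup.of j)⁻¹ * (FreeGroup.of i) ^ 2 * FreeGroup.of j) *
      ((FreeGroup.of i) ^ 2 * (FreeGroup.of j) ^ (2 * nPar (A i j)))⁻¹} ∪
  {x | ∃ i j : I, i ≠ j ∧ mOf (A i j * A j i) ≠ 0 ∧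
    x = braidWord (mOf (A i j * A j i)) i j * (braidWord (mOf (A i j * A j i)) j i)⁻¹}

/-- The spin-extended Weyl group `W^spin(Π)` presented by generators `r_i` and relations
(R1) `r_i⁸ = 1`, (R2) `r_j⁻¹ r_i² r_j = r_i² r_j^{2n(i,j)}`, (R3) braid relations. -/
abbrev Wspin {I : Type*} (A : I → I → ℤ) := PresentedGroup (spinRels A)

/-- The generator `r_i` of `W^spin(Π)`. -/
def rgen {I : Type*} (A : I → I → ℤ) (i : I) : Wspin A :=
  PresentedGroup.of (rels := spinRels A) i

lemma nPar_cases (a : ℤ) : nPar a = 0 ∨ nPar a = 1 := by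
  unfold nPar; split <;> simp

lemma spin_mk_rel {I : Type*} (A : I → I → ℤ) {r : FreeGroup I} (h : r ∈ spinRels A) :
    PresentedGroup.mk (spinRels A) r = 1 :=
  (QuotientGroup.eq_one_iff _).mpr (Subgroup.subset_normalClosure h)

lemma spin_r1 {I : Type*} (A : I → I → ℤ) (i : I) : rgen A i ^ 8 = 1 := by
  have h := spin_mk_rel A (Or.inl (Or.inl ⟨i, rfl⟩))
  simpa [rgen, PresentedGroup.of, map_pow] using h

lemma spin_r2 {I : Type*} (A : I → I → ℤ) {i j : I} (h : i ≠ j) :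
    (rgen A j)⁻¹ * rgen A i ^ 2 * rgen A j =
      rgen A i ^ 2 * rgen A j ^ (2 * nPar (A i j)) := by
  have h1 := spin_mk_rel A (Or.inl (Or.inr ⟨i, j, h, rfl⟩))
  rw [← mul_inv_eq_one]
  simpa [rgen, PresentedGroup.of, map_mul, map_inv, map_pow] using h1

/-- Conjugation of `r_i²` by `r_j²`. -/
lemma spin_conj {I : Type*} (A : I → I → ℤ) {i j : I} (h : i ≠ j) :
    (rgen A j ^ 2)⁻¹ * rgen A i ^ 2 * rgen A j ^ 2 =
      rgen A i ^ 2 * rgen A j ^ (4 * nPar (A i j)) := by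
  set a := rgen A i
  set b := rgen A j
  have K := spin_r2 A h
  calc (b ^ 2)⁻¹ * a ^ 2 * b ^ 2 = b⁻¹ * (b⁻¹ * a ^ 2 * b) * b := by rw [pow_two b]; group
    _ = b⁻¹ * (a ^ 2 * b ^ (2 * nPar (A i j))) * b := by rw [K]
    _ = (b⁻¹ * a ^ 2 * b) * b ^ (2 * nPar (A i j)) := by group
    _ = a ^ 2 * b ^ (2 * nPar (A i j)) * b ^ (2 * nPar (A i j)) := by rw [K]
    _ = a ^ 2 * b ^ (4 * nPar (A i j)) := by
        rw [mul_assoc, ← pow_add]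
        congr 2
        ring

/-- Part (a), first identity. -/
lemma spin_comm4 {I : Type*} (A : I → I → ℤ) {i j : I} (h : i ≠ j) :
    (rgen A i ^ 2)⁻¹ * (rgen A j ^ 2)⁻¹ * rgen A i ^ 2 * rgen A j ^ 2 =
      rgen A j ^ (4 * nPar (A i j)) := by
  have K2 := spin_conj A h
  calc (rgen A i ^ 2)⁻¹ * (rgen A j ^ 2)⁻¹ * rgen A i ^ 2 * rgen A j ^ 2
      = (rgen A i ^ 2)⁻¹ * ((rgen A j ^ 2)⁻¹ * rgen A i ^ 2 * rgen A j ^ 2) := by group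
    _ = (rgen A i ^ 2)⁻¹ * (rgen A i ^ 2 * rgen A j ^ (4 * nPar (A i j))) := by rw [K2]
    _ = rgen A j ^ (4 * nPar (A i j)) := by group

lemma spin_self_inv {I : Type*} (A : I → I → ℤ) (j : I) (n : ℕ) :
    rgen A j ^ (4 * n) * rgen A j ^ (4 * n) = 1 := by
  rw [← pow_add, show 4 * n + 4 * n = 8 * n by ring, pow_mul, spin_r1,
    one_pow]

/-- Part (a), second identity. -/
lemma spin_a2 {I : Type*} (A : I → I → ℤ) {i j : I} (h : i ≠ j) :
    rgen A i ^ (4 * nPar (A j i)) = rgen A j ^ (4 * nPar (A i j)) := by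
  have h1 := spin_comm4 A h
  have h2 := spin_comm4 A h.symm
  have hinv : rgen A i ^ (4 * nPar (A j i)) = (rgen A j ^ (4 * nPar (A i j)))⁻¹ := by
    rw [← h2, ← h1]; group
  rw [hinv, inv_eq_of_mul_eq_one_left (spin_self_inv A j _)]

/-- Part (d). -/
lemma spin_d {I : Type*} (A : I → I → ℤ) {i j : I} (h : i ≠ j) :
    rgen A j * rgen A i ^ 4 = rgen A i ^ 4 * rgen A j := by
  set a := rgen A i
  set b := rgen A j
  have K := spin_r2 A h
  have hb8 : b ^ 8 = 1 := spin_r1 A j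
  have hconj : b⁻¹ * a ^ 4 * b = a ^ 4 := by
    rcases nPar_cases (A i j) with hn | hn <;> rw [hn] at K
    · have K' : b⁻¹ * a ^ 2 * b = a ^ 2 := by simpa using K
      calc b⁻¹ * a ^ 4 * b = (b⁻¹ * a ^ 2 * b) * (b⁻¹ * a ^ 2 * b) := by group
        _ = a ^ 2 * a ^ 2 := by rw [K']
        _ = a ^ 4 := by group
    · have K' : b⁻¹ * a ^ 2 * b = a ^ 2 * b ^ 2 := by simpa using K
      have K2 := spin_conj A h
      rw [hn] at K2
      have K2' : (b ^ 2)⁻¹ * a ^ 2 * b ^ 2 = a ^ 2 * b ^ 4 := by simpa using K2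
      have hba : b ^ 2 * a ^ 2 = a ^ 2 * b ^ 6 := by
        calc b ^ 2 * a ^ 2 = b ^ 2 * (a ^ 2 * b ^ 4) * (b ^ 4)⁻¹ := by group
          _ = b ^ 2 * ((b ^ 2)⁻¹ * a ^ 2 * b ^ 2) * (b ^ 4)⁻¹ := by rw [K2']
          _ = a ^ 2 * b ^ 6 * (b ^ 8)⁻¹ := by group
          _ = a ^ 2 * b ^ 6 := by rw [hb8]; group
      calc b⁻¹ * a ^ 4 * b = (b⁻¹ * a ^ 2 * b) * (b⁻¹ * a ^ 2 * b) := by group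
        _ = (a ^ 2 * b ^ 2) * (a ^ 2 * b ^ 2) := by rw [K']
        _ = a ^ 2 * (b ^ 2 * a ^ 2) * b ^ 2 := by group
        _ = a ^ 2 * (a ^ 2 * b ^ 6) * b ^ 2 := by rw [hba]
        _ = a ^ 4 * b ^ 8 := by group
        _ = a ^ 4 := by rw [hb8]; group
  have goal' : a ^ 4 * b = b * (b⁻¹ * a ^ 4 * b) := by group
  rw [hconj] at goal'
  exact goal'.symm

/-- In `W^spin(Π)` of a generalized Cartan matrix `A`, for all `i ≠ j`:
(a) `[r_i², r_j²] = r_j^{4n(i,j)}` and `r_i^{4n(j,i)} = r_j^{4n(i,j)}`;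
(b) if `n(i,j) = n(j,i) = 1` then `r_i⁴ = r_j⁴`, otherwise `r_i²` and `r_j²` commute;
(c) if `n(i,j) = 0` and `n(j,i) = 1` then `r_i⁴ = 1`;
(d) `r_j` commutes with `r_i⁴`.
Consequently the subgroup generated by the `r_i⁴` is central. -/
theorem stmt18 {I : Type*} (A : I → I → ℤ)
    (hdiag : ∀ i, A i i = 2)
    (hoff : ∀ i j, i ≠ j → A i j ≤ 0)
    (hzero : ∀ i j, i ≠ j → (A i j = 0 → A j i = 0)) :
    (∀ i j : I, i ≠ j →
      ((rgen A i ^ 2)⁻¹ * (rgen A j ^ 2)⁻¹ * rgen A i ^ 2 * rgen A j ^ 2 =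
          rgen A j ^ (4 * nPar (A i j)) ∧
        rgen A i ^ (4 * nPar (A j i)) = rgen A j ^ (4 * nPar (A i j))) ∧
      ((nPar (A i j) = 1 ∧ nPar (A j i) = 1) → rgen A i ^ 4 = rgen A j ^ 4) ∧
      (¬(nPar (A i j) = 1 ∧ nPar (A j i) = 1) →
        rgen A i ^ 2 * rgen A j ^ 2 = rgen A j ^ 2 * rgen A i ^ 2) ∧
      ((nPar (A i j) = 0 ∧ nPar (A j i) = 1) → rgen A i ^ 4 = 1) ∧
      (rgen A j * rgen A i ^ 4 = rgen A i ^ 4 * rgen A j)) ∧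
    Subgroup.closure {x : Wspin A | ∃ i : I, x = rgen A i ^ 4} ≤
      Subgroup.center (Wspin A) := by
  constructor
  · intro i j hij
    refine ⟨⟨spin_comm4 A hij, spin_a2 A hij⟩, ?_, ?_, ?_, spin_d A hij⟩
    · rintro ⟨hn, hm⟩
      have := spin_a2 A hij
      rw [hn, hm] at this
      simpa using this
    · intro hnot
      have hbn : rgen A j ^ (4 * nPar (A i j)) = 1 := by
        rcases nPar_cases (A i j) with hn | hn
        · rw [hn]; simp
        · rcases nPar_cases (A j i) with hm | hm
          · have := spin_a2 A hij
            rw [hm] at this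
            simpa using this.symm
          · exact absurd ⟨hn, hm⟩ hnot
      have h1 := spin_comm4 A hij
      rw [hbn] at h1
      calc rgen A i ^ 2 * rgen A j ^ 2
          = rgen A j ^ 2 * rgen A i ^ 2 *
            ((rgen A i ^ 2)⁻¹ * (rgen A j ^ 2)⁻¹ * rgen A i ^ 2 * rgen A j ^ 2) := by group
        _ = rgen A j ^ 2 * rgen A i ^ 2 := by rw [h1, mul_one]
    · rintro ⟨hn, hm⟩
      have := spin_a2 A hij
      rw [hn, hm] at this
      simpa using this
  · rw [Subgroup.closure_le]
    rintro x ⟨i, rfl⟩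
    rw [SetLike.mem_coe, Subgroup.mem_center_iff]
    intro g
    have hg : g ∈ Subgroup.closure (Set.range (PresentedGroup.of : I → Wspin A)) := by
      rw [PresentedGroup.closure_range_of]; trivial
    induction hg using Subgroup.closure_induction with
    | mem x hx =>
        obtain ⟨j, rfl⟩ := hx
        by_cases hji : j = i
        · subst hji
          show rgen A j * rgen A j ^ 4 = rgen A j ^ 4 * rgen A j
          group
        · exact spin_d A (fun h => hji h.symm)
    | one => simp
    | mul x y hx hy ihx ihy => rw [mul_assoc, ihy, ← mul_assoc, ihx, mul_assoc]
    | inv x hx ihx => exact (Commute.inv_left ihx : _)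
end
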